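/- Let f ≥ 2 be a natural number and n > 0 a real number. The function φ(α) = (1/2)·(nα)^f·e^{−nα}/f! + (1/2)·(nα)^{f−1}·e^{−nα}/(f−1)! on [0,∞) attains its unique critical point in (0,∞) at α* = √(f(f−1))/n. -/

import Mathlib

noncomputable def Dphi (f : ℕ) (n α : ℝ) : ℝ :=
  n * Real.exp (-(n*α)) *
    ( ((f:ℝ)*(n*α)^(f-1) - (n*α)^f)/(2*(f.factorial:ℝ)) +
      (((f:ℝ)-1)*(n*α)^(f-2) - (n*α)^(f-1))/(2*((f-1).factorial:ℝ)) )

lemma phiD (f : ℕ) (hf : 2 ≤ f) (n : ℝ) (α : ℝ) :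
    HasDerivAt (fun α : ℝ =>
        (1 / 2) * (n * α) ^ f * Real.exp (-(n * α)) / (Nat.factorial f) +
        (1 / 2) * (n * α) ^ (f - 1) * Real.exp (-(n * α)) / (Nat.factorial (f - 1)))
      (Dphi f n α) α := by
  have hu : HasDerivAt (fun α : ℝ => n * α) n α := by
    simpa using (hasDerivAt_id α).const_mul n
  have he : HasDerivAt (fun α : ℝ => Real.exp (-(n*α))) (-n * Real.exp (-(n*α))) α := by
    have := (hu.neg).exp
    simpa [mul_comm] using this
  have h1 : HasDerivAt (fun α : ℝ => (n*α)^f) ((f:ℝ)*(n*α)^(f-1)*n) α := hu.pow f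
  have h2 : HasDerivAt (fun α : ℝ => (n*α)^(f-1)) (((f-1:ℕ):ℝ)*(n*α)^(f-1-1)*n) α :=
    hu.pow (f-1)
  have hp1 := ((h1.mul he).const_mul (1/2 : ℝ)).div_const (f.factorial : ℝ)
  have hp2 := ((h2.mul he).const_mul (1/2 : ℝ)).div_const ((f-1).factorial : ℝ)
  have := hp1.add hp2
  refine (this.congr_of_eventuallyEq (Filter.Eventually.of_forall fun x => ?_)).congr_deriv ?_
  · simp only [Pi.add_apply, Pi.mul_apply]; ring
  · symm; unfold Dphi
    rw [show f-1-1 = f-2 from by omega, Nat.cast_sub (by omega : 1 ≤ f)]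
    push_cast
    ring

lemma key_zero (f : ℕ) (hf : 2 ≤ f) (x : ℝ) (hx2 : x^2 = (f:ℝ)*((f:ℝ)-1)) :
    ((f:ℝ)*x^(f-1) - x^f)/(2*(f.factorial:ℝ)) +
      (((f:ℝ)-1)*x^(f-2) - x^(f-1))/(2*((f-1).factorial:ℝ)) = 0 := by
  have hfact : (f.factorial:ℝ) = (f:ℝ) * ((f-1).factorial:ℝ) := by
    rw [← Nat.mul_factorial_pred (by omega : f ≠ 0)]
    push_cast; ring
  have e1 : x^(f-1) = x^(f-2)*x := by
    rw [show f-1 = (f-2)+1 from by omega, pow_succ]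
  have e2 : x^f = x^(f-2)*x^2 := by
    conv_lhs => rw [show f = (f-2)+2 from by omega]
    rw [pow_add]
  have hfpos : (0:ℝ) < (f:ℝ) := by positivity
  have hfac1 : ((f-1).factorial:ℝ) ≠ 0 := by positivity
  rw [e1, e2, hx2, hfact]
  field_simp
  ring

theorem stmt_5 (f : ℕ) (hf : 2 ≤ f) (n : ℝ) (hn : 0 < n) :
    (HasDerivAt (fun α : ℝ =>
        (1 / 2) * (n * α) ^ f * Real.exp (-(n * α)) / (Nat.factorial f) +
        (1 / 2) * (n * α) ^ (f - 1) * Real.exp (-(n * α)) / (Nat.factorial (f - 1)))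
      0 (Real.sqrt ((f : ℝ) * ((f : ℝ) - 1)) / n)) ∧
    (∀ α : ℝ, 0 < α →
      deriv (fun α : ℝ =>
        (1 / 2) * (n * α) ^ f * Real.exp (-(n * α)) / (Nat.factorial f) +
        (1 / 2) * (n * α) ^ (f - 1) * Real.exp (-(n * α)) / (Nat.factorial (f - 1))) α = 0 →
      α = Real.sqrt ((f : ℝ) * ((f : ℝ) - 1)) / n) := by
  have hffpos : (0:ℝ) ≤ (f:ℝ)*((f:ℝ)-1) := by
    have : (2:ℝ) ≤ (f:ℝ) := by exact_mod_cast hf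
    nlinarith
  constructor
  · have hd := phiD f hf n (Real.sqrt ((f:ℝ)*((f:ℝ)-1)) / n)
    have hx : n * (Real.sqrt ((f:ℝ)*((f:ℝ)-1)) / n) = Real.sqrt ((f:ℝ)*((f:ℝ)-1)) := by
      field_simp
    have hz : Dphi f n (Real.sqrt ((f:ℝ)*((f:ℝ)-1)) / n) = 0 := by
      unfold Dphi
      rw [hx, key_zero f hf _ (Real.sq_sqrt hffpos), mul_zero]
    rwa [hz] at hd
  · intro α hα hderiv
    have hd := phiD f hf n α
    rw [hd.deriv] at hderiv
    set x := n * α with hxdef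
    have hxpos : 0 < x := by positivity
    have hB : ((f:ℝ)*x^(f-1) - x^f)/(2*(f.factorial:ℝ)) +
        (((f:ℝ)-1)*x^(f-2) - x^(f-1))/(2*((f-1).factorial:ℝ)) = 0 := by
      have hne : n * Real.exp (-x) ≠ 0 := by positivity
      unfold Dphi at hderiv
      exact (mul_eq_zero.1 hderiv).resolve_left hne
    have hfact : (f.factorial:ℝ) = (f:ℝ) * ((f-1).factorial:ℝ) := by
      rw [← Nat.mul_factorial_pred (by omega : f ≠ 0)]
      push_cast; ring
    have e1 : x^(f-1) = x^(f-2)*x := by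
      rw [show f-1 = (f-2)+1 from by omega, pow_succ]
    have e2 : x^f = x^(f-2)*x^2 := by
      conv_lhs => rw [show f = (f-2)+2 from by omega]
      rw [pow_add]
    have hfpos : (0:ℝ) < (f:ℝ) := by positivity
    have hfac1 : (0:ℝ) < ((f-1).factorial:ℝ) := by positivity
    have ha : (0:ℝ) < x^(f-2) := by positivity
    rw [e1, e2, hfact] at hB
    have hx2 : x^2 = (f:ℝ)*((f:ℝ)-1) := by
      have h2 : x^(f-2) * ((f:ℝ)*((f:ℝ)-1) - x^2) = 0 := by
        field_simp at hB
        nlinarith [hB]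
      have := (mul_eq_zero.1 h2).resolve_left (ne_of_gt ha)
      linarith
    have hsx : Real.sqrt ((f:ℝ)*((f:ℝ)-1)) = x := by
      rw [← hx2, Real.sqrt_sq hxpos.le]
    rw [hsx, hxdef]
    field_simp
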